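/- Let n ≥ 1, D > 0, G > 0, T ≥ 1. Let K ⊆ ℝ^n be nonempty, closed, and convex with ‖x − y‖₂ ≤ D for all x, y ∈ K. Let f₁,…,f_T : ℝ^n → ℝ, let x₁ ∈ K, and suppose for each t = 1,…,T: g_t ∈ ℝ^n satisfies ‖g_t‖₂ ≤ G and f_t(y) ≥ f_t(x_t) + ⟨g_t, y − x_t⟩ for all y ∈ K; and x_{t+1} ∈ K satisfies ‖x_{t+1} − (x_t − (D/(G√t)) g_t)‖₂ ≤ ‖z − (x_t − (D/(G√t)) g_t)‖₂ for all z ∈ K (i.e., x_{t+1} is the Euclidean projection of the gradient step onto K). Then for every x* ∈ K: ∑_{t=1}^T f_t(x_t) − ∑_{t=1}^T f_t(x*) ≤ 3 D G √T. -/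

import Mathlib

open scoped RealInnerProductSpace

/-- The Euclidean (ℓ²) norm on `ℝ^n`. -/
noncomputable def l2Norm {n : ℕ} (v : Fin n → ℝ) : ℝ := Real.sqrt (∑ i, (v i) ^ 2)

lemma norm_conv {n : ℕ} (v : EuclideanSpace ℝ (Fin n)) : l2Norm (fun i => v i) = ‖v‖ := by
  rw [EuclideanSpace.norm_eq, l2Norm]
  congr 1
  apply Finset.sum_congr rfl
  intros
  rw [Real.norm_eq_abs, sq_abs]

lemma inner_conv {n : ℕ} (u v : EuclideanSpace ℝ (Fin n)) :
    ⟪u, v⟫ = ∑ i, u i * v i := by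
  simp [PiLp.inner_apply, RCLike.inner_apply, conj_trivial, mul_comm]

lemma sum_inv_sqrt (T : ℕ) : ∑ t ∈ Finset.Icc 1 T, 1 / Real.sqrt t ≤ 2 * Real.sqrt T := by
  induction T with
  | zero => simp
  | succ T ih =>
    rw [Finset.sum_Icc_succ_top (by omega)]
    have h1 : (0:ℝ) ≤ T := Nat.cast_nonneg T
    have hs : Real.sqrt T ^ 2 = T := Real.sq_sqrt h1
    have hs' : Real.sqrt (T+1) ^ 2 = (T:ℝ)+1 := Real.sq_sqrt (by linarith)
    have hpos : 0 < Real.sqrt ((T:ℝ)+1) := Real.sqrt_pos.2 (by linarith)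
    have hnn : 0 ≤ Real.sqrt (T:ℝ) := Real.sqrt_nonneg _
    have key : 1 / Real.sqrt ((T:ℝ)+1) ≤ 2 * Real.sqrt ((T:ℝ)+1) - 2 * Real.sqrt T := by
      rw [div_le_iff₀ hpos]
      nlinarith [sq_nonneg (Real.sqrt T - Real.sqrt ((T:ℝ)+1))]
    push_cast
    linarith [ih]

lemma abel_bound (a c : ℕ → ℝ) (D2 : ℝ) (hc : ∀ t, 0 ≤ c t) (hcmono : ∀ t, c t ≤ c (t+1)) :
    ∀ T, 1 ≤ T → (∀ t, 1 ≤ t → t ≤ T + 1 → 0 ≤ a t ∧ a t ≤ D2) →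
      ∑ t ∈ Finset.Icc 1 T, c t * (a t - a (t+1)) ≤ D2 * c T - c T * a (T+1) := by
  intro T hT
  induction T, hT using Nat.le_induction with
  | base =>
    intro ha
    simp only [Finset.Icc_self, Finset.sum_singleton]
    obtain ⟨h1a, h1b⟩ := ha 1 le_rfl (by norm_num)
    nlinarith [hc 1]
  | succ T hT ih =>
    intro ha
    have ih' := ih (fun t h1 h2 => ha t h1 (by omega))
    rw [Finset.sum_Icc_succ_top (by omega)]
    obtain ⟨ha1, ha2⟩ := ha (T+1) (by omega) (by omega)
    nlinarith [mul_nonneg (sub_nonneg.2 (hcmono T)) (sub_nonneg.2 ha2)]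

lemma step_lemma {n : ℕ} (K : Set (EuclideanSpace ℝ (Fin n))) (hKconv : Convex ℝ K)
    (a p s gt : EuclideanSpace ℝ (Fin n)) (η Gb : ℝ)
    (hp : p ∈ K) (hs : s ∈ K)
    (hgn : ‖gt‖ ≤ Gb) (hGb : 0 ≤ Gb)
    (hmin : ∀ z ∈ K, ‖p - (a - η • gt)‖ ≤ ‖z - (a - η • gt)‖) :
    2 * η * ⟪gt, a - s⟫ ≤ ‖a - s‖^2 - ‖p - s‖^2 + η^2 * Gb^2 := by
  set y := a - η • gt with hy
  haveI : Nonempty K := ⟨⟨p, hp⟩⟩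
  have hinf : ‖y - p‖ = ⨅ w : K, ‖y - w‖ := by
    apply le_antisymm
    · apply le_ciInf
      intro w
      rw [norm_sub_rev, norm_sub_rev y]
      exact hmin w w.2
    · have hbdd : BddBelow (Set.range fun w : K => ‖y - (w : EuclideanSpace ℝ (Fin n))‖) := by
        refine ⟨0, ?_⟩
        rintro r ⟨w, rfl⟩
        exact norm_nonneg _
      exact ciInf_le hbdd ⟨p, hp⟩
  have hobtuse : ⟪y - p, s - p⟫ ≤ 0 :=
    (norm_eq_iInf_iff_real_inner_le_zero hKconv hp).1 hinf s hs
  have hcontr : ‖p - s‖^2 ≤ ‖y - s‖^2 := by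
    have hexp : ‖y - s‖^2 = ‖(y - p) + (p - s)‖^2 := by rw [sub_add_sub_cancel]
    rw [hexp, norm_add_sq_real]
    have : ⟪y - p, p - s⟫ = -⟪y - p, s - p⟫ := by
      rw [← inner_neg_right, neg_sub]
    nlinarith [sq_nonneg ‖y - p‖]
  have hexp2 : ‖y - s‖^2 = ‖a - s‖^2 - 2 * η * ⟪gt, a - s⟫ + η^2 * ‖gt‖^2 := by
    have h1 : y - s = (a - s) - η • gt := by rw [hy]; abel
    rw [h1, norm_sub_sq_real, real_inner_smul_right, real_inner_comm, norm_smul,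
      Real.norm_eq_abs, mul_pow, sq_abs]
    ring
  have hg2 : ‖gt‖^2 ≤ Gb^2 := by nlinarith [norm_nonneg gt]
  nlinarith [sq_nonneg η]

theorem stmt7 (n T : ℕ) (hn : 1 ≤ n) (hT : 1 ≤ T)
    (D G : ℝ) (hD : 0 < D) (hG : 0 < G)
    (K : Set (Fin n → ℝ)) (hKne : K.Nonempty) (hKcl : IsClosed K) (hKconv : Convex ℝ K)
    (hKdiam : ∀ x ∈ K, ∀ y ∈ K, l2Norm (fun i => x i - y i) ≤ D)
    (f : ℕ → (Fin n → ℝ) → ℝ) (x g : ℕ → Fin n → ℝ)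
    (hx1 : x 1 ∈ K)
    (hg : ∀ t, 1 ≤ t → t ≤ T →
      l2Norm (g t) ≤ G ∧
      ∀ y ∈ K, f t y ≥ f t (x t) + ∑ i, g t i * (y i - x t i))
    (hproj : ∀ t, 1 ≤ t → t ≤ T →
      x (t + 1) ∈ K ∧
      ∀ z ∈ K,
        l2Norm (fun i => x (t + 1) i - (x t i - (D / (G * Real.sqrt t)) * g t i))
          ≤ l2Norm (fun i => z i - (x t i - (D / (G * Real.sqrt t)) * g t i)))
    (xstar : Fin n → ℝ) (hxstar : xstar ∈ K) :
    (∑ t ∈ Finset.Icc 1 T, f t (x t)) - ∑ t ∈ Finset.Icc 1 T, f t xstar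
      ≤ 3 * D * G * Real.sqrt T := by
  classical
  let X : ℕ → EuclideanSpace ℝ (Fin n) := fun t => WithLp.toLp 2 (x t)
  let Gv : ℕ → EuclideanSpace ℝ (Fin n) := fun t => WithLp.toLp 2 (g t)
  let S : EuclideanSpace ℝ (Fin n) := WithLp.toLp 2 xstar
  let K' : Set (EuclideanSpace ℝ (Fin n)) := WithLp.ofLp ⁻¹' K
  have hK'conv : Convex ℝ K' := fun a ha b hb s t hs ht hst => by
    simp only [K', Set.mem_preimage, WithLp.ofLp_add, WithLp.ofLp_smul]; exact hKconv ha hb hs ht hst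
  -- membership of iterates
  have xK : ∀ t, 1 ≤ t → t ≤ T + 1 → x t ∈ K := by
    intro t ht1
    induction t, ht1 using Nat.le_induction with
    | base => intro _; exact hx1
    | succ t ht ih => intro h; exact (hproj t ht (by omega)).1
  -- squared-distance bounds
  have hA : ∀ t, 1 ≤ t → t ≤ T + 1 → 0 ≤ ‖X t - S‖^2 ∧ ‖X t - S‖^2 ≤ D^2 := by
    intro t h1 h2
    refine ⟨sq_nonneg _, ?_⟩
    have hd := hKdiam (x t) (xK t h1 h2) xstar hxstar
    have he : l2Norm (fun i => x t i - xstar i) = ‖X t - S‖ := norm_conv (X t - S)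
    rw [he] at hd
    nlinarith [norm_nonneg (X t - S)]
  -- per-round inequality
  have main : ∀ t ∈ Finset.Icc 1 T, f t (x t) - f t xstar ≤
      (G * Real.sqrt t / (2*D)) * (‖X t - S‖^2 - ‖X (t+1) - S‖^2)
        + (D*G/2) * (1 / Real.sqrt t) := by
    intro t htm
    rw [Finset.mem_Icc] at htm
    obtain ⟨h1, h2⟩ := htm
    obtain ⟨hgnorm, hsub⟩ := hg t h1 h2
    obtain ⟨hmem, hmin⟩ := hproj t h1 h2
    have hstpos : 0 < Real.sqrt t := Real.sqrt_pos.2 (by exact_mod_cast Nat.pos_of_ne_zero (by omega))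
    set η := D / (G * Real.sqrt t) with hηdef
    have hη : 0 < η := div_pos hD (mul_pos hG hstpos)
    have hgn : ‖Gv t‖ ≤ G := by
      have he : l2Norm (g t) = ‖Gv t‖ := norm_conv (Gv t)
      rw [he] at hgnorm; exact hgnorm
    have hmin' : ∀ z ∈ K', ‖X (t+1) - (X t - η • Gv t)‖ ≤ ‖z - (X t - η • Gv t)‖ := by
      intro z hz
      have h := hmin z hz
      have e1 : l2Norm (fun i => x (t+1) i - (x t i - η * g t i))
          = ‖X (t+1) - (X t - η • Gv t)‖ := norm_conv (X (t+1) - (X t - η • Gv t))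
      have e2 : l2Norm (fun i => z i - (x t i - η * g t i))
          = ‖z - (X t - η • Gv t)‖ := norm_conv (z - (X t - η • Gv t))
      rw [e1, e2] at h
      exact h
    have hstep := step_lemma K' hK'conv (X t) (X (t+1)) S (Gv t) η G hmem hxstar hgn hG.le hmin'
    -- subgradient inequality
    have hsg := hsub xstar hxstar
    have hinner : ⟪Gv t, S - X t⟫ = ∑ i, g t i * (xstar i - x t i) := inner_conv (Gv t) (S - X t)
    have hinner2 : ⟪Gv t, X t - S⟫ = -⟪Gv t, S - X t⟫ := by
      rw [← inner_neg_right, neg_sub]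
    have hf : f t (x t) - f t xstar ≤ ⟪Gv t, X t - S⟫ := by
      rw [hinner2, hinner]; linarith [hsg]
    -- arithmetic with η
    have e3 : G * Real.sqrt t / (2*D) = 1/(2*η) := by
      rw [hηdef]; field_simp
    have e4 : (D*G/2) * (1/Real.sqrt t) = η * G^2 / 2 := by
      rw [hηdef]; field_simp
    rw [e3, e4]
    have h2η : (0:ℝ) < 2*η := by linarith
    have h3 : ⟪Gv t, X t - S⟫ ≤
        ((‖X t - S‖^2 - ‖X (t+1) - S‖^2) + η^2*G^2)/(2*η) := by
      rw [le_div_iff₀ h2η, mul_comm]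
      linarith [hstep]
    have e5 : ((‖X t - S‖^2 - ‖X (t+1) - S‖^2) + η^2*G^2)/(2*η)
        = 1/(2*η) * (‖X t - S‖^2 - ‖X (t+1) - S‖^2) + η * G^2/2 := by
      field_simp
    rw [e5] at h3
    linarith
  -- assemble
  have hc : ∀ t : ℕ, 0 ≤ G * Real.sqrt t / (2*D) := fun t => by positivity
  have hcmono : ∀ t : ℕ, G * Real.sqrt t / (2*D) ≤ G * Real.sqrt (t+1:ℕ) / (2*D) := by
    intro t
    have : Real.sqrt t ≤ Real.sqrt ((t:ℝ)+1) := Real.sqrt_le_sqrt (by linarith)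
    push_cast
    gcongr
  have habel := abel_bound (fun t => ‖X t - S‖^2) (fun t => G * Real.sqrt t / (2*D)) (D^2)
    hc hcmono T hT hA
  have hsis := sum_inv_sqrt T
  have hsum1 : (∑ t ∈ Finset.Icc 1 T, f t (x t)) - ∑ t ∈ Finset.Icc 1 T, f t xstar
      = ∑ t ∈ Finset.Icc 1 T, (f t (x t) - f t xstar) := (Finset.sum_sub_distrib _ _).symm
  rw [hsum1]
  have hsum2 : ∑ t ∈ Finset.Icc 1 T, (f t (x t) - f t xstar) ≤
      ∑ t ∈ Finset.Icc 1 T, ((G * Real.sqrt t / (2*D)) * (‖X t - S‖^2 - ‖X (t+1) - S‖^2)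
        + (D*G/2) * (1 / Real.sqrt t)) := Finset.sum_le_sum main
  rw [Finset.sum_add_distrib, ← Finset.mul_sum] at hsum2
  have hAT : 0 ≤ ‖X (T+1) - S‖^2 := sq_nonneg _
  have hcT : 0 ≤ G * Real.sqrt T / (2*D) := hc T
  have hsqT : 0 ≤ Real.sqrt T := Real.sqrt_nonneg _
  have h6 : (D*G/2) * ∑ t ∈ Finset.Icc 1 T, (1 / Real.sqrt t) ≤ (D*G/2) * (2 * Real.sqrt T) := by
    apply mul_le_mul_of_nonneg_left hsis (by positivity)
  have h7 : D^2 * (G * Real.sqrt T / (2*D)) = D * G * Real.sqrt T / 2 := by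
    field_simp
  nlinarith [mul_nonneg hcT hAT, mul_pos hD hG, mul_nonneg (mul_pos hD hG).le hsqT]
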